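/- Let Hom_R(H, Λ²H) ⋊ GL(H) be the semidirect product with respect to the action (A·f)(u) = Λ²A(f(A⁻¹u)), i.e. with multiplication (f', A')·(f, A) = (f' + A'·f, A'A). Then the map sending (f, A) to the self-map (ξ, u) ↦ (2·f(Au) + Λ²A(ξ), Au) of 𝒢₂ is a group isomorphism from Hom_R(H, Λ²H) ⋊ GL(H) onto the full automorphism group Aut(𝒢₂) of the group 𝒢₂. -/

import Mathlib

namespace Paper

open ExteriorAlgebra

open scoped TensorProduct

open scoped commutatorElement

variable {R : Type*} [CommRing R] {H : Type*} [AddCommGroup H] [Module R H]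

theorem wedge_mem (v w : H) : ι R v * ι R w ∈ ⋀[R]^2 H := by
  rw [show (⋀[R]^2 H) = LinearMap.range (ι R (M := H)) * LinearMap.range (ι R (M := H)) from
    sq _]
  exact Submodule.mul_mem_mul (LinearMap.mem_range_self _ v) (LinearMap.mem_range_self _ w)

/-- The wedge product `H × H → Λ²H` as a bilinear map. -/
noncomputable def wedge : H →ₗ[R] H →ₗ[R] ↥(⋀[R]^2 H) :=
  LinearMap.mk₂ R (fun v w => ⟨ι R v * ι R w, wedge_mem v w⟩)
    (fun v v' w => Subtype.ext (by simp [add_mul]))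
    (fun c v w => Subtype.ext (by simp [smul_mul_assoc]))
    (fun v w w' => Subtype.ext (by simp [mul_add]))
    (fun c v w => Subtype.ext (by simp [mul_smul_comm]))

theorem wedge_self (v : H) : wedge (R := R) v v = 0 :=
  Subtype.ext (ι_sq_zero v)

section G2

variable [Invertible (2 : R)]

/-- The group `𝒢₂ = Λ²H × H` with multiplication
`(a, v) · (b, w) = (½ v∧w + a + b, v + w)`. -/
noncomputable instance g2Group : Group (↥(⋀[R]^2 H) × H) where
  mul x y := (⅟(2 : R) • wedge (R := R) x.2 y.2 + x.1 + y.1, x.2 + y.2)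
  one := (0, 0)
  inv x := (-x.1, -x.2)
  mul_assoc x y z := by
    refine Prod.ext ?_ ?_
    · show ⅟(2 : R) • wedge (R := R) (x.2 + y.2) z.2 +
          (⅟(2 : R) • wedge (R := R) x.2 y.2 + x.1 + y.1) + z.1 =
        ⅟(2 : R) • wedge (R := R) x.2 (y.2 + z.2) + x.1 +
          (⅟(2 : R) • wedge (R := R) y.2 z.2 + y.1 + z.1)
      simp only [map_add, LinearMap.add_apply, smul_add]
      abel
    · exact add_assoc _ _ _
  one_mul x := by
    have : (⅟(2 : R) • wedge (R := R) (0 : H) x.2 + 0 + x.1, (0 : H) + x.2) = x := by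
      simp
    exact this
  mul_one x := by
    have : (⅟(2 : R) • wedge (R := R) x.2 (0 : H) + x.1 + 0, x.2 + (0 : H)) = x := by
      simp
    exact this
  inv_mul_cancel x := by
    have : (⅟(2 : R) • wedge (R := R) (-x.2) x.2 + -x.1 + x.1, -x.2 + x.2) =
        ((0, 0) : ↥(⋀[R]^2 H) × H) := by
      simp [wedge_self]
    exact this

end G2

theorem map_exteriorPower_le (f : H →ₗ[R] H) (n : ℕ) :
    Submodule.map (ExteriorAlgebra.map f).toLinearMap (⋀[R]^n H) ≤ ⋀[R]^n H := by
  rw [show ((⋀[R]^n H : Submodule R (ExteriorAlgebra R H))) =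
      (LinearMap.range (ι R (M := H))) ^ n from rfl, Submodule.map_pow]
  have h1 : Submodule.map (ExteriorAlgebra.map f).toLinearMap
      (LinearMap.range (ι R (M := H))) ≤ LinearMap.range (ι R (M := H)) := by
    intro x hx
    rw [Submodule.mem_map] at hx
    obtain ⟨y, hy, rfl⟩ := hx
    rw [LinearMap.mem_range] at hy
    obtain ⟨v, rfl⟩ := hy
    exact ⟨f v, (map_apply_ι f v).symm⟩
  induction n with
  | zero => simp
  | succ n ih =>
      rw [pow_succ, pow_succ]
      exact mul_le_mul' ih h1

/-- The endomorphism `Λ²f` of `Λ²H` induced by an endomorphism `f` of `H`. -/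
noncomputable def map2 (f : H →ₗ[R] H) : ↥(⋀[R]^2 H) →ₗ[R] ↥(⋀[R]^2 H) :=
  (ExteriorAlgebra.map f).toLinearMap.restrict (p := ⋀[R]^2 H) (q := ⋀[R]^2 H)
    (fun x hx => map_exteriorPower_le f 2 (Submodule.mem_map_of_mem hx))

section AuxLemmas

theorem wedge_coe (v w : H) :
    (wedge (R := R) v w : ExteriorAlgebra R H) = ι R v * ι R w := rfl

theorem wedge_antisymm (v w : H) : wedge (R := R) w v = - wedge (R := R) v w := by
  have h := wedge_self (R := R) (v + w)
  simp only [map_add, LinearMap.add_apply, wedge_self, add_zero, zero_add] at h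
  exact eq_neg_of_add_eq_zero_left h

/-- Extension principle: two additive maps on `Λ²H` agreeing on wedges agree. -/
theorem ext2 {N : Type*} [AddCommGroup N] (ψ χ : ↥(⋀[R]^2 H) → N)
    (hψ : ∀ x y, ψ (x + y) = ψ x + ψ y) (hχ : ∀ x y, χ (x + y) = χ x + χ y)
    (h : ∀ v w : H, ψ (wedge v w) = χ (wedge v w)) (ξ : ↥(⋀[R]^2 H)) : ψ ξ = χ ξ := by
  obtain ⟨x, hx⟩ := ξ
  have hsq : (⋀[R]^2 H : Submodule R (ExteriorAlgebra R H)) =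
      LinearMap.range (ι R (M := H)) * LinearMap.range (ι R (M := H)) := sq _
  have hx' : x ∈ LinearMap.range (ι R (M := H)) * LinearMap.range (ι R (M := H)) := by
    rw [← hsq]; exact hx
  refine Submodule.mul_induction_on'
    (C := fun y hy => ∀ hy2 : y ∈ ⋀[R]^2 H, ψ ⟨y, hy2⟩ = χ ⟨y, hy2⟩) ?_ ?_ hx' hx
  · intro m hm n hn hy2
    obtain ⟨v, rfl⟩ := hm
    obtain ⟨w, rfl⟩ := hn
    have hw : (⟨ι R v * ι R w, hy2⟩ : ↥(⋀[R]^2 H)) = wedge v w :=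
      Subtype.ext (wedge_coe v w).symm
    rw [hw]; exact h v w
  · intro a ha b hb iha ihb hy2
    have ha2 : a ∈ ⋀[R]^2 H := by rw [hsq]; exact ha
    have hb2 : b ∈ ⋀[R]^2 H := by rw [hsq]; exact hb
    have hab : (⟨a + b, hy2⟩ : ↥(⋀[R]^2 H)) = ⟨a, ha2⟩ + ⟨b, hb2⟩ := rfl
    rw [hab, hψ, hχ, iha ha2, ihb hb2]

theorem map2_coe (f : H →ₗ[R] H) (ξ : ↥(⋀[R]^2 H)) :
    (map2 f ξ : ExteriorAlgebra R H) = ExteriorAlgebra.map f ξ := rfl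

theorem map2_wedge (f : H →ₗ[R] H) (v w : H) :
    map2 (R := R) f (wedge v w) = wedge (f v) (f w) := by
  apply Subtype.ext
  rw [map2_coe, wedge_coe, wedge_coe, map_mul, map_apply_ι, map_apply_ι]

theorem map2_map2 (f g : H →ₗ[R] H) (ξ : ↥(⋀[R]^2 H)) :
    map2 f (map2 g ξ) = map2 (f ∘ₗ g) ξ :=
  ext2 (fun ξ => map2 f (map2 g ξ)) (fun ξ => map2 (f ∘ₗ g) ξ)
    (fun x y => by simp only [map_add]) (fun x y => by simp only [map_add])
    (fun v w => by simp only [map2_wedge, LinearMap.comp_apply]) ξ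

theorem map2_id (ξ : ↥(⋀[R]^2 H)) : map2 (R := R) (LinearMap.id (M := H)) ξ = ξ :=
  ext2 (fun ξ => map2 LinearMap.id ξ) (fun ξ => ξ)
    (fun x y => by simp only [map_add]) (fun _ _ => rfl)
    (fun v w => by simp only [map2_wedge, LinearMap.id_apply]) ξ

/-- Over a localization of `ℤ`, additive maps between modules are linear. -/
theorem additive_linear (P : Ideal ℤ) [P.IsPrime] {R : Type*} [CommRing R] [Algebra ℤ R]
    [IsLocalization.AtPrime R P] {M N : Type*} [AddCommGroup M] [Module R M]
    [AddCommGroup N] [Module R N] (f : M → N) (hf : ∀ x y, f (x + y) = f x + f y)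
    (c : R) (x : M) : f (c • x) = c • f x := by
  let F : M →+ N := AddMonoidHom.mk' f hf
  have hF : ∀ (n : ℤ) (y : M), f (n • y) = n • f y := fun n y => map_zsmul F n y
  obtain ⟨⟨m, s⟩, hms⟩ := IsLocalization.surj (M := P.primeCompl) c
  have hcast : ∀ k : ℤ, algebraMap ℤ R k = (k : R) := fun k => eq_intCast (algebraMap ℤ R) k
  have hu : IsUnit (((s : ℤ) : R)) := by
    rw [← hcast]; exact IsLocalization.map_units R s
  simp only [hcast] at hms
  have key : (((s : ℤ)) : R) • f (c • x) = (((s : ℤ)) : R) • (c • f x) := by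
    calc (((s : ℤ)) : R) • f (c • x)
        = (s : ℤ) • f (c • x) := Int.cast_smul_eq_zsmul R _ _
      _ = f ((s : ℤ) • c • x) := (hF _ _).symm
      _ = f ((((s : ℤ)) : R) • c • x) := by rw [Int.cast_smul_eq_zsmul R]
      _ = f (((((s : ℤ)) : R) * c) • x) := by rw [smul_smul]
      _ = f (((m : R)) • x) := by rw [mul_comm, hms]
      _ = f ((m : ℤ) • x) := by rw [Int.cast_smul_eq_zsmul R]
      _ = (m : ℤ) • f x := hF _ _
      _ = ((m : R)) • f x := (Int.cast_smul_eq_zsmul R _ _).symm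
      _ = (c * (((s : ℤ)) : R)) • f x := by rw [hms]
      _ = (((s : ℤ)) : R) • (c • f x) := by rw [mul_comm, mul_smul]
  obtain ⟨r, hr⟩ := hu.exists_left_inv
  have l1 : r • ((((s : ℤ)) : R) • f (c • x)) = f (c • x) := by
    rw [← mul_smul, hr, one_smul]
  have l2 : r • ((((s : ℤ)) : R) • (c • f x)) = c • f x := by
    rw [← mul_smul, hr, one_smul]
  rw [← l1, key, l2]

section G2Aux

variable [Invertible (2 : R)]

theorem g2_mul (x y : ↥(⋀[R]^2 H) × H) :
    x * y = (⅟(2 : R) • wedge (R := R) x.2 y.2 + x.1 + y.1, x.2 + y.2) := rfl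

theorem g2_one : (1 : ↥(⋀[R]^2 H) × H) = (0, 0) := rfl

theorem g2_inv (x : ↥(⋀[R]^2 H) × H) : x⁻¹ = (-x.1, -x.2) := rfl

theorem invOf_two_add_invOf_two' : (⅟(2 : R)) + ⅟(2 : R) = 1 := by
  rw [← two_mul, mul_invOf_self]

theorem g2_comm (x y : ↥(⋀[R]^2 H) × H) :
    ⁅x, y⁆ = (wedge (R := R) x.2 y.2, 0) := by
  obtain ⟨a, v⟩ := x
  obtain ⟨b, w⟩ := y
  rw [commutatorElement_def, g2_inv, g2_inv, g2_mul, g2_mul, g2_mul]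
  refine Prod.ext ?_ ?_
  · show ⅟(2 : R) • wedge (R := R) (v + w + -v) (-w) +
      (⅟(2 : R) • wedge (R := R) (v + w) (-v) +
        (⅟(2 : R) • wedge (R := R) v w + a + b) + -a) + -b = wedge (R := R) v w
    have h1 : wedge (R := R) (v + w + -v) (-w) = 0 := by
      simp only [map_add, map_neg, LinearMap.add_apply, LinearMap.neg_apply, wedge_self,
        neg_neg]
      rw [wedge_antisymm w v]
      abel
    have h2 : wedge (R := R) (v + w) (-v) = wedge (R := R) v w := by
      simp only [map_add, map_neg, LinearMap.add_apply, LinearMap.neg_apply, wedge_self,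
        neg_neg]
      rw [wedge_antisymm w v]
      abel
    rw [h1, h2, smul_zero]
    have : (⅟(2 : R)) • wedge (R := R) v w + ⅟(2 : R) • wedge (R := R) v w =
        wedge (R := R) v w := by
      rw [← add_smul, invOf_two_add_invOf_two', one_smul]
    calc (0 : ↥(⋀[R]^2 H)) + (⅟(2 : R) • wedge (R := R) v w +
          (⅟(2 : R) • wedge (R := R) v w + a + b) + -a) + -b
        = ⅟(2 : R) • wedge (R := R) v w + ⅟(2 : R) • wedge (R := R) v w := by abel
      _ = wedge (R := R) v w := this
  · show v + w + -v + -w = 0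
    abel

/-- The forward map of the isomorphism: `(f, A)` gives an automorphism of `𝒢₂`. -/
noncomputable def theta (f : H →ₗ[R] ↥(⋀[R]^2 H)) (A : H ≃ₗ[R] H) :
    MulAut (↥(⋀[R]^2 H) × H) where
  toFun x := ((2 : R) • f (A x.2) + map2 (A : H →ₗ[R] H) x.1, A x.2)
  invFun y := (map2 (A.symm : H →ₗ[R] H) (y.1 - (2 : R) • f y.2), A.symm y.2)
  left_inv x := by
    have hid : (A.symm : H →ₗ[R] H) ∘ₗ (A : H →ₗ[R] H) = LinearMap.id := by
      ext u; simp
    refine Prod.ext ?_ (A.symm_apply_apply x.2)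
    show map2 (A.symm : H →ₗ[R] H)
        ((2 : R) • f (A x.2) + map2 (A : H →ₗ[R] H) x.1 - (2 : R) • f (A x.2)) = x.1
    rw [add_sub_cancel_left, map2_map2, hid, map2_id]
  right_inv y := by
    have hid : (A : H →ₗ[R] H) ∘ₗ (A.symm : H →ₗ[R] H) = LinearMap.id := by
      ext u; simp
    refine Prod.ext ?_ (A.apply_symm_apply y.2)
    show (2 : R) • f (A (A.symm y.2)) +
        map2 (A : H →ₗ[R] H) (map2 (A.symm : H →ₗ[R] H) (y.1 - (2 : R) • f y.2)) = y.1
    rw [A.apply_symm_apply, map2_map2, hid, map2_id, add_sub_cancel]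
  map_mul' x y := by
    refine Prod.ext ?_ ?_
    · show (2 : R) • f (A (x.2 + y.2)) +
          map2 (A : H →ₗ[R] H) (⅟(2 : R) • wedge (R := R) x.2 y.2 + x.1 + y.1) =
        ⅟(2 : R) • wedge (R := R) (A x.2) (A y.2) +
          ((2 : R) • f (A x.2) + map2 (A : H →ₗ[R] H) x.1) +
          ((2 : R) • f (A y.2) + map2 (A : H →ₗ[R] H) y.1)
      have hw : map2 (A : H →ₗ[R] H) (wedge (R := R) x.2 y.2) =
          wedge (R := R) (A x.2) (A y.2) := map2_wedge _ _ _
      rw [map_add A, map_add f, smul_add, map_add, map_add, map_smul, hw]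
      abel
    · show A (x.2 + y.2) = A x.2 + A y.2
      exact map_add A _ _

theorem theta_apply (f : H →ₗ[R] ↥(⋀[R]^2 H)) (A : H ≃ₗ[R] H) (ξ : ↥(⋀[R]^2 H)) (u : H) :
    theta f A (ξ, u) = ((2 : R) • f (A u) + map2 (A : H →ₗ[R] H) ξ, A u) := rfl

theorem theta_injective :
    Function.Injective
      (fun p : (H →ₗ[R] ↥(⋀[R]^2 H)) × (H ≃ₗ[R] H) => theta p.1 p.2) := by
  rintro ⟨f, A⟩ ⟨f', A'⟩ hEq
  simp only at hEq
  have happ : ∀ x, theta f A x = theta f' A' x := fun x => by rw [hEq]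
  have hA : A = A' := by
    refine LinearEquiv.ext fun u => ?_
    exact congrArg Prod.snd (happ (0, u))
  have hf : f = f' := by
    refine LinearMap.ext fun u => ?_
    have h0 := congrArg Prod.fst (happ (0, A.symm u))
    simp only [theta_apply, map_zero, add_zero, A.apply_symm_apply] at h0
    rw [← hA, A.apply_symm_apply] at h0
    have h1 := congrArg (fun y => (⅟(2 : R)) • y) h0
    simpa only [smul_smul, invOf_mul_self, one_smul] using h1
  rw [hf, hA]

end G2Aux

/-- Surjectivity of `theta` onto the automorphism group. -/
theorem theta_surjective (P : Ideal ℤ) [P.IsPrime] {R : Type*} [CommRing R] [Algebra ℤ R]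
    [IsLocalization.AtPrime R P] [Invertible (2 : R)] {H : Type*} [AddCommGroup H]
    [Module R H] (φ : MulAut (↥(⋀[R]^2 H) × H)) :
    ∃ (f : H →ₗ[R] ↥(⋀[R]^2 H)) (A : H ≃ₗ[R] H), theta f A = φ := by
  -- the second coordinate of the image of a central element vanishes
  have hsnd : ∀ (ψ : MulAut (↥(⋀[R]^2 H) × H)) (ξ : ↥(⋀[R]^2 H)), (ψ (ξ, 0)).2 = 0 := by
    intro ψ ξ
    refine ext2 (fun ξ => (ψ (ξ, (0 : H))).2) (fun _ => (0 : H)) ?_ (fun _ _ => (add_zero 0).symm) ?_ ξ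
    · intro x y
      have hmul : ((x, (0 : H)) * (y, (0 : H)) : ↥(⋀[R]^2 H) × H) = (x + y, 0) := by
        rw [g2_mul]; simp
      calc (ψ (x + y, (0 : H))).2 = (ψ ((x, (0 : H)) * (y, 0))).2 := by rw [hmul]
        _ = (ψ (x, (0 : H))).2 + (ψ (y, (0 : H))).2 := by rw [map_mul, g2_mul]
    · intro v w
      have hcomm : ((wedge (R := R) v w, (0 : H)) : ↥(⋀[R]^2 H) × H) =
          ⁅((0 : ↥(⋀[R]^2 H)), v), ((0 : ↥(⋀[R]^2 H)), w)⁆ :=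
        (g2_comm ((0 : ↥(⋀[R]^2 H)), v) ((0 : ↥(⋀[R]^2 H)), w)).symm
      show (ψ (wedge (R := R) v w, (0 : H))).2 = (0 : H)
      rw [hcomm, map_commutatorElement, g2_comm]
  -- splitting of an automorphism
  have hsplit : ∀ (ψ : MulAut (↥(⋀[R]^2 H) × H)) (ξ : ↥(⋀[R]^2 H)) (u : H),
      ψ (ξ, u) = ((ψ (ξ, 0)).1 + (ψ (0, u)).1, (ψ ((0 : ↥(⋀[R]^2 H)), u)).2) := by
    intro ψ ξ u
    have hmul : ((ξ, (0 : H)) * ((0 : ↥(⋀[R]^2 H)), u) : ↥(⋀[R]^2 H) × H) = (ξ, u) := by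
      rw [g2_mul]; simp
    rw [← hmul, map_mul, g2_mul]
    refine Prod.ext ?_ ?_
    · show ⅟(2 : R) • wedge (R := R) (ψ (ξ, 0)).2 (ψ (0, u)).2 +
        (ψ (ξ, 0)).1 + (ψ (0, u)).1 = (ψ (ξ, 0)).1 + (ψ (0, u)).1
      rw [hsnd]
      simp
    · show (ψ (ξ, 0)).2 + (ψ (0, u)).2 = (ψ (0, u)).2
      rw [hsnd, zero_add]
  have hB0 : ∀ (ψ : MulAut (↥(⋀[R]^2 H) × H)), (ψ ((0 : ↥(⋀[R]^2 H)), (0 : H))).1 = 0 := by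
    intro ψ
    have : ψ 1 = 1 := map_one ψ
    rw [g2_one] at this
    exact congrArg Prod.fst this
  -- additivity of the induced map on H
  have hAadd : ∀ u w : H, (φ ((0 : ↥(⋀[R]^2 H)), u + w)).2 =
      (φ ((0 : ↥(⋀[R]^2 H)), u)).2 + (φ ((0 : ↥(⋀[R]^2 H)), w)).2 := by
    intro u w
    have hmul : (((0 : ↥(⋀[R]^2 H)), u) * ((0 : ↥(⋀[R]^2 H)), w) : ↥(⋀[R]^2 H) × H) =
        (⅟(2 : R) • wedge (R := R) u w, u + w) := by
      rw [g2_mul]; simp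
    have h1 := congrArg Prod.snd (map_mul φ ((0 : ↥(⋀[R]^2 H)), u) ((0 : ↥(⋀[R]^2 H)), w))
    rw [hmul] at h1
    rw [hsplit φ (⅟(2 : R) • wedge (R := R) u w) (u + w)] at h1
    dsimp only at h1
    rw [g2_mul] at h1
    exact h1
  have hAsmul : ∀ (c : R) (u : H), (φ ((0 : ↥(⋀[R]^2 H)), c • u)).2 =
      c • (φ ((0 : ↥(⋀[R]^2 H)), u)).2 :=
    fun c u => additive_linear P (fun u => (φ ((0 : ↥(⋀[R]^2 H)), u)).2) hAadd c u
  -- the inverse map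
  have hleft : ∀ u : H, (φ.symm ((0 : ↥(⋀[R]^2 H)), (φ ((0 : ↥(⋀[R]^2 H)), u)).2)).2 = u := by
    intro u
    have h1 : φ.symm (φ ((0 : ↥(⋀[R]^2 H)), u)) = (0, u) := φ.symm_apply_apply _
    have h2 : φ ((0 : ↥(⋀[R]^2 H)), u) =
        ((φ ((0 : ↥(⋀[R]^2 H)), u)).1, (φ ((0 : ↥(⋀[R]^2 H)), u)).2) := rfl
    rw [h2] at h1
    have h3 := congrArg Prod.snd h1
    rw [hsplit φ.symm] at h3
    exact h3
  have hright : ∀ u : H, (φ ((0 : ↥(⋀[R]^2 H)), (φ.symm ((0 : ↥(⋀[R]^2 H)), u)).2)).2 = u := by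
    intro u
    have h1 : φ (φ.symm ((0 : ↥(⋀[R]^2 H)), u)) = (0, u) := φ.apply_symm_apply _
    have h2 : φ.symm ((0 : ↥(⋀[R]^2 H)), u) =
        ((φ.symm ((0 : ↥(⋀[R]^2 H)), u)).1, (φ.symm ((0 : ↥(⋀[R]^2 H)), u)).2) := rfl
    rw [h2] at h1
    have h3 := congrArg Prod.snd h1
    rw [hsplit φ] at h3
    exact h3
  -- the linear automorphism A
  let A : H ≃ₗ[R] H :=
    { toFun := fun u => (φ ((0 : ↥(⋀[R]^2 H)), u)).2
      map_add' := hAadd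
      map_smul' := hAsmul
      invFun := fun u => (φ.symm ((0 : ↥(⋀[R]^2 H)), u)).2
      left_inv := hleft
      right_inv := hright }
  -- additivity of B
  have hBadd : ∀ ξ η : ↥(⋀[R]^2 H), (φ (ξ + η, (0 : H))).1 =
      (φ (ξ, (0 : H))).1 + (φ (η, (0 : H))).1 := by
    intro ξ η
    have hmul : ((ξ, (0 : H)) * (η, (0 : H)) : ↥(⋀[R]^2 H) × H) = (ξ + η, 0) := by
      rw [g2_mul]; simp
    have h1 := congrArg Prod.fst (map_mul φ (ξ, (0 : H)) (η, (0 : H)))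
    rw [hmul, g2_mul] at h1
    rw [h1]
    show ⅟(2 : R) • wedge (R := R) (φ (ξ, 0)).2 (φ (η, 0)).2 +
      (φ (ξ, 0)).1 + (φ (η, 0)).1 = _
    rw [hsnd]
    simp
  have hBsmul : ∀ (c : R) (ξ : ↥(⋀[R]^2 H)), (φ (c • ξ, (0 : H))).1 =
      c • (φ (ξ, (0 : H))).1 :=
    fun c ξ => additive_linear P (fun ξ => (φ (ξ, (0 : H))).1) hBadd c ξ
  -- B on wedges
  have hBwedge : ∀ v w : H, (φ (wedge (R := R) v w, (0 : H))).1 =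
      wedge (R := R) (φ ((0 : ↥(⋀[R]^2 H)), v)).2 (φ ((0 : ↥(⋀[R]^2 H)), w)).2 := by
    intro v w
    have h1 := map_commutatorElement φ ((0 : ↥(⋀[R]^2 H)), v) ((0 : ↥(⋀[R]^2 H)), w)
    rw [g2_comm, g2_comm] at h1
    exact congrArg Prod.fst h1
  -- additivity of h
  have hhadd : ∀ u w : H, (φ ((0 : ↥(⋀[R]^2 H)), u + w)).1 =
      (φ ((0 : ↥(⋀[R]^2 H)), u)).1 + (φ ((0 : ↥(⋀[R]^2 H)), w)).1 := by
    intro u w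
    have hmul : (((0 : ↥(⋀[R]^2 H)), u) * ((0 : ↥(⋀[R]^2 H)), w) : ↥(⋀[R]^2 H) × H) =
        (⅟(2 : R) • wedge (R := R) u w, u + w) := by
      rw [g2_mul]; simp
    have h1 := congrArg Prod.fst (map_mul φ ((0 : ↥(⋀[R]^2 H)), u) ((0 : ↥(⋀[R]^2 H)), w))
    rw [hmul] at h1
    rw [hsplit φ (⅟(2 : R) • wedge (R := R) u w) (u + w)] at h1
    dsimp only at h1
    rw [g2_mul] at h1
    dsimp only at h1
    rw [hBsmul, hBwedge] at h1
    exact add_left_cancel (h1.trans (add_assoc _ _ _))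
  have hhsmul : ∀ (c : R) (u : H), (φ ((0 : ↥(⋀[R]^2 H)), c • u)).1 =
      c • (φ ((0 : ↥(⋀[R]^2 H)), u)).1 :=
    fun c u => additive_linear P (fun u => (φ ((0 : ↥(⋀[R]^2 H)), u)).1) hhadd c u
  let hlm : H →ₗ[R] ↥(⋀[R]^2 H) :=
    { toFun := fun u => (φ ((0 : ↥(⋀[R]^2 H)), u)).1
      map_add' := hhadd
      map_smul' := hhsmul }
  refine ⟨⅟(2 : R) • (hlm ∘ₗ (A.symm : H →ₗ[R] H)), A, ?_⟩
  refine MulEquiv.ext fun x => ?_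
  obtain ⟨ξ, u⟩ := x
  rw [theta_apply, hsplit φ ξ u]
  refine Prod.ext ?_ rfl
  show (2 : R) • (⅟(2 : R) • (hlm ∘ₗ (A.symm : H →ₗ[R] H))) (A u) +
      map2 (A : H →ₗ[R] H) ξ = (φ (ξ, 0)).1 + (φ ((0 : ↥(⋀[R]^2 H)), u)).1
  have h2f : (2 : R) • (⅟(2 : R) • (hlm ∘ₗ (A.symm : H →ₗ[R] H))) (A u) =
      (φ ((0 : ↥(⋀[R]^2 H)), u)).1 := by
    rw [LinearMap.smul_apply, smul_smul, mul_invOf_self, one_smul, LinearMap.comp_apply]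
    rw [show ((A.symm : H →ₗ[R] H) (A u)) = u from A.symm_apply_apply u]
    rfl
  have hmap2 : map2 (A : H →ₗ[R] H) ξ = (φ (ξ, (0 : H))).1 :=
    ext2 (fun ξ => map2 (A : H →ₗ[R] H) ξ) (fun ξ => (φ (ξ, (0 : H))).1)
      (fun x y => by simp only [map_add]) hBadd
      (fun v w => by
        show map2 (A : H →ₗ[R] H) (wedge (R := R) v w) = (φ (wedge (R := R) v w, (0 : H))).1
        rw [map2_wedge, hBwedge]; rfl) ξ
  rw [h2f, hmap2, add_comm]

end AuxLemmas


/-- The map `(f, A) ↦ ((ξ, u) ↦ (2·f(Au) + Λ²A(ξ), Au))` is a group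
isomorphism from the semidirect product `Hom(H, Λ²H) ⋊ GL(H)` (with action
`(A·f)(u) = Λ²A(f(A⁻¹u))`, i.e. multiplication `(f', A')·(f, A) = (f' + A'·f, A'A)`)
onto the full automorphism group `Aut(𝒢₂)`. -/
theorem stmt8 (P : Ideal ℤ) [P.IsPrime] (hP2 : (2 : ℤ) ∉ P) (hP3 : (3 : ℤ) ∉ P)
    {R : Type*} [CommRing R] [Algebra ℤ R] [IsLocalization.AtPrime R P] [Invertible (2 : R)]
    {H : Type*} [AddCommGroup H] [Module R H] {g : ℕ} (hg : 1 ≤ g)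
    (e : Module.Basis (Fin (2 * g)) R H) :
    ∃ Θ : ((H →ₗ[R] ↥(⋀[R]^2 H)) × (H ≃ₗ[R] H)) ≃ MulAut (↥(⋀[R]^2 H) × H),
      (∀ (f : H →ₗ[R] ↥(⋀[R]^2 H)) (A : H ≃ₗ[R] H) (ξ : ↥(⋀[R]^2 H)) (u : H),
        Θ (f, A) (ξ, u) = ((2 : R) • f (A u) + map2 (R := R) (A : H →ₗ[R] H) ξ, A u)) ∧
      (∀ (f f' : H →ₗ[R] ↥(⋀[R]^2 H)) (A A' : H ≃ₗ[R] H),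
        Θ (f' + map2 (R := R) (A' : H →ₗ[R] H) ∘ₗ f ∘ₗ (A'.symm : H →ₗ[R] H), A' * A) =
          Θ (f', A') * Θ (f, A)) := by
  refine ⟨Equiv.ofBijective (fun p : (H →ₗ[R] ↥(⋀[R]^2 H)) × (H ≃ₗ[R] H) => theta p.1 p.2)
    ⟨theta_injective, fun φ => ?_⟩, ?_, ?_⟩
  · obtain ⟨f, A, hfA⟩ := theta_surjective P φ
    exact ⟨(f, A), hfA⟩
  · intro f A ξ u
    exact theta_apply f A ξ u
  · intro f f' A A'
    refine MulEquiv.ext fun x => ?_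
    obtain ⟨ξ, u⟩ := x
    show theta (f' + map2 (R := R) (A' : H →ₗ[R] H) ∘ₗ f ∘ₗ (A'.symm : H →ₗ[R] H)) (A' * A)
        (ξ, u) = theta f' A' (theta f A (ξ, u))
    rw [theta_apply, theta_apply, theta_apply]
    have hmulapp : ∀ v : H, (A' * A) v = A' (A v) := fun v => rfl
    have hcoe : ((A' * A : H ≃ₗ[R] H) : H →ₗ[R] H) =
        (A' : H →ₗ[R] H) ∘ₗ (A : H →ₗ[R] H) := rfl
    refine Prod.ext ?_ (hmulapp u)
    show (2 : R) • (f' + map2 (R := R) (A' : H →ₗ[R] H) ∘ₗ f ∘ₗ (A'.symm : H →ₗ[R] H))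
        ((A' * A) u) + map2 ((A' * A : H ≃ₗ[R] H) : H →ₗ[R] H) ξ =
      (2 : R) • f' (A' (A u)) +
        map2 (A' : H →ₗ[R] H) ((2 : R) • f (A u) + map2 (A : H →ₗ[R] H) ξ)
    rw [hcoe, ← map2_map2]
    simp only [LinearMap.add_apply, LinearMap.comp_apply, hmulapp,
      LinearEquiv.coe_coe, LinearEquiv.symm_apply_apply]
    rw [map_add, map_smul, smul_add]
    abel

end Paper
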